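/- Two infinite binary sequences s and t satisfy: for every k, |val(s|k) − val(t|k)| ≤ 1 (all same-length prefixes are equal or adjacent) if and only if Σ_{i} s_i/2^{i+1} = Σ_{i} t_i/2^{i+1}, i.e., they represent the same real number in [0,1]. -/

import Mathlib

/-- The base-2 value of the length-`k` prefix of a binary sequence. -/
def valPrefix (s : ℕ → Fin 2) (k : ℕ) : ℕ :=
  ∑ i ∈ Finset.range k, (s i : ℕ) * 2 ^ (k - 1 - i)

lemma summable_bits (s : ℕ → Fin 2) :
    Summable (fun i : ℕ => ((s i : ℕ) : ℝ) / 2 ^ (i + 1)) := by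
  apply Summable.of_nonneg_of_le (fun i => by positivity) (fun i => ?_)
    summable_geometric_two
  have h1 : ((s i : ℕ) : ℝ) ≤ 1 := by
    have := (s i).is_le; exact_mod_cast this
  calc ((s i : ℕ) : ℝ) / 2 ^ (i + 1) ≤ 1 / 2 ^ (i + 1) := by gcongr
    _ ≤ (1/2) ^ i := by
        rw [div_pow, one_pow]
        apply div_le_div_of_nonneg_left one_pos.le (by positivity)
        exact pow_le_pow_right₀ one_le_two (Nat.le_succ i)

lemma prefix_div (s : ℕ → Fin 2) (k : ℕ) :
    (valPrefix s k : ℝ) / 2 ^ k = ∑ i ∈ Finset.range k, ((s i : ℕ) : ℝ) / 2 ^ (i + 1) := by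
  rw [valPrefix]
  push_cast
  rw [Finset.sum_div]
  refine Finset.sum_congr rfl fun i hi => ?_
  rw [Finset.mem_range] at hi
  rw [div_eq_div_iff (by positivity) (by positivity), mul_assoc, ← pow_add]
  congr 2
  omega

lemma tail_bounds (s : ℕ → Fin 2) (k : ℕ) :
    0 ≤ (∑' i : ℕ, ((s i : ℕ) : ℝ) / 2 ^ (i + 1)) - (valPrefix s k : ℝ) / 2 ^ k ∧
    (∑' i : ℕ, ((s i : ℕ) : ℝ) / 2 ^ (i + 1)) - (valPrefix s k : ℝ) / 2 ^ k ≤ 1 / 2 ^ k := by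
  have hs := summable_bits s
  have hsum := hs.sum_add_tsum_nat_add k
  rw [prefix_div]
  have heq : (∑' i : ℕ, ((s i : ℕ) : ℝ) / 2 ^ (i + 1)) -
      ∑ i ∈ Finset.range k, ((s i : ℕ) : ℝ) / 2 ^ (i + 1)
      = ∑' i : ℕ, ((s (i + k) : ℕ) : ℝ) / 2 ^ (i + k + 1) := by
    rw [← hsum]; ring
  rw [heq]
  have hts : Summable (fun i : ℕ => ((s (i + k) : ℕ) : ℝ) / 2 ^ (i + k + 1)) :=
    hs.comp_injective (add_left_injective k)
  constructor
  · exact tsum_nonneg fun i => by positivity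
  · have hle : ∀ i : ℕ, ((s (i + k) : ℕ) : ℝ) / 2 ^ (i + k + 1) ≤ (1/2) ^ (k+1) * (1/2) ^ i := by
      intro i
      have h1 : ((s (i + k) : ℕ) : ℝ) ≤ 1 := by
        have := (s (i + k)).is_le; exact_mod_cast this
      have h2 : ((s (i + k) : ℕ) : ℝ) / 2 ^ (i + k + 1) ≤ 1 / 2 ^ (i + k + 1) := by gcongr
      refine h2.trans_eq ?_
      rw [div_pow, div_pow, one_pow, div_mul_div_comm, one_mul, ← pow_add,
        show k + 1 + i = i + k + 1 by omega, one_pow]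
    have hg : Summable (fun i : ℕ => ((1:ℝ)/2) ^ (k+1) * (1/2) ^ i) :=
      summable_geometric_two.mul_left _
    calc (∑' i : ℕ, ((s (i + k) : ℕ) : ℝ) / 2 ^ (i + k + 1))
        ≤ ∑' i : ℕ, ((1:ℝ)/2) ^ (k+1) * (1/2) ^ i := Summable.tsum_le_tsum hle hts hg
      _ = ((1:ℝ)/2) ^ (k+1) * 2 := by rw [tsum_mul_left, tsum_geometric_two]
      _ = 1 / 2 ^ k := by
          rw [div_pow, one_pow, pow_succ]
          field_simp

lemma abs_real_le_one (a b : ℕ) (h : |(a : ℝ) - (b : ℝ)| ≤ 1) :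
    |(a : ℤ) - (b : ℤ)| ≤ 1 := by
  rw [← @Int.cast_le ℝ, Int.cast_abs]
  push_cast
  exact h

lemma abs_real_le_one' (a b : ℕ) (h : |(a : ℤ) - (b : ℤ)| ≤ 1) :
    |(a : ℝ) - (b : ℝ)| ≤ 1 := by
  rw [← @Int.cast_le ℝ, Int.cast_abs] at h
  push_cast at h
  exact h

lemma unscale_le (a b : ℕ) (k : ℕ)
    (h : (a : ℝ) / 2 ^ k - (b : ℝ) / 2 ^ k ≤ 1 / 2 ^ k) : (a : ℝ) - b ≤ 1 := by
  have h2k : (0:ℝ) < 2 ^ k := by positivity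
  have := mul_le_mul_of_nonneg_right (sub_div (a:ℝ) b (2^k) ▸ h) h2k.le
  rw [div_mul_cancel₀ _ h2k.ne', div_mul_cancel₀ _ h2k.ne'] at this
  exact this

/-- Two infinite binary sequences have all their same-length prefixes equal or adjacent
(values differing by at most 1) iff they represent the same real number in `[0,1]`. -/
theorem stmt_10 (s t : ℕ → Fin 2) :
    (∀ k : ℕ, |(valPrefix s k : ℤ) - (valPrefix t k : ℤ)| ≤ 1) ↔
      (∑' i : ℕ, ((s i : ℕ) : ℝ) / 2 ^ (i + 1)) =
      (∑' i : ℕ, ((t i : ℕ) : ℝ) / 2 ^ (i + 1)) := by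
  constructor
  · intro h
    by_contra hne
    set x := ∑' i : ℕ, ((s i : ℕ) : ℝ) / 2 ^ (i + 1) with hx
    set y := ∑' i : ℕ, ((t i : ℕ) : ℝ) / 2 ^ (i + 1) with hy
    have hpos : 0 < |x - y| := abs_pos.mpr (sub_ne_zero.mpr hne)
    obtain ⟨k, hk⟩ := exists_pow_lt_of_lt_one (show (0:ℝ) < |x - y| / 3 by positivity)
      (show (1:ℝ)/2 < 1 by norm_num)
    have hs := tail_bounds s k
    have ht := tail_bounds t k
    rw [← hx] at hs
    rw [← hy] at ht
    have h2k : (0:ℝ) < 2 ^ k := by positivity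
    have h1 : |(valPrefix s k : ℝ) - (valPrefix t k : ℝ)| ≤ 1 :=
      abs_real_le_one' _ _ (h k)
    have hd : |(valPrefix s k : ℝ) / 2 ^ k - (valPrefix t k : ℝ) / 2 ^ k| ≤ 1 / 2 ^ k := by
      rw [div_sub_div_same, abs_div, abs_of_pos h2k]
      gcongr
    have hbound : |x - y| ≤ 3 * (1 / 2 ^ k) := by
      have hsplit : x - y = (x - (valPrefix s k : ℝ) / 2 ^ k)
          + ((valPrefix s k : ℝ) / 2 ^ k - (valPrefix t k : ℝ) / 2 ^ k)
          - (y - (valPrefix t k : ℝ) / 2 ^ k) := by ring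
      have habs1 : |x - (valPrefix s k : ℝ) / 2 ^ k| ≤ 1 / 2 ^ k := by
        rw [abs_of_nonneg hs.1]; exact hs.2
      have habs2 : |y - (valPrefix t k : ℝ) / 2 ^ k| ≤ 1 / 2 ^ k := by
        rw [abs_of_nonneg ht.1]; exact ht.2
      calc |x - y| = |(x - (valPrefix s k : ℝ) / 2 ^ k)
          + ((valPrefix s k : ℝ) / 2 ^ k - (valPrefix t k : ℝ) / 2 ^ k)
          - (y - (valPrefix t k : ℝ) / 2 ^ k)| := by rw [← hsplit]
        _ ≤ |(x - (valPrefix s k : ℝ) / 2 ^ k)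
          + ((valPrefix s k : ℝ) / 2 ^ k - (valPrefix t k : ℝ) / 2 ^ k)|
          + |y - (valPrefix t k : ℝ) / 2 ^ k| := abs_sub _ _
        _ ≤ |x - (valPrefix s k : ℝ) / 2 ^ k|
          + |(valPrefix s k : ℝ) / 2 ^ k - (valPrefix t k : ℝ) / 2 ^ k|
          + |y - (valPrefix t k : ℝ) / 2 ^ k| :=
            add_le_add (abs_add_le _ _) le_rfl
        _ ≤ 1 / 2 ^ k + 1 / 2 ^ k + 1 / 2 ^ k :=
            add_le_add (add_le_add habs1 hd) habs2
        _ = 3 * (1 / 2 ^ k) := by ring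
    have hk' : (1:ℝ) / 2 ^ k < |x - y| / 3 := by
      rw [show ((1:ℝ)/2) ^ k = 1 / 2 ^ k by rw [div_pow, one_pow]] at hk
      exact hk
    linarith
  · intro h k
    have hs := tail_bounds s k
    have ht := tail_bounds t k
    rw [← h] at ht
    refine abs_real_le_one _ _ (abs_le.mpr ⟨?_, ?_⟩)
    · have := unscale_le (valPrefix t k) (valPrefix s k) k (by linarith [hs.1, ht.2])
      linarith
    · exact unscale_le (valPrefix s k) (valPrefix t k) k (by linarith [hs.2, ht.1])
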